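/- arXiv:2012.06476 — 2 statements merged into one kernel-verified Lean document; each statement's English description precedes it below -/
import Mathlib

section
/- For every positive integer n, the number of representations r(n) of n as a sum of two squares of integers (counting signs and order) satisfies r(n) = 4∑_{d|n} χ₄(d), where χ₄ is the non-principal Dirichlet character modulo 4. -/
noncomputable def chi4 (d : ℕ) : ℤ :=
  if d % 4 = 1 then 1 else if d % 4 = 3 then -1 else 0

section SSide

lemma chi4_one : chi4 1 = 1 := by norm_num [chi4]

lemma chi4_mul (m n : ℕ) : chi4 (m * n) = chi4 m * chi4 n := by
  unfold chi4
  rw [Nat.mul_mod]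
  have hm : m % 4 < 4 := Nat.mod_lt _ (by norm_num)
  have hn : n % 4 < 4 := Nat.mod_lt _ (by norm_num)
  interval_cases h1 : m % 4 <;> interval_cases h2 : n % 4 <;> norm_num

lemma chi4_pow (p k : ℕ) : chi4 (p ^ k) = chi4 p ^ k := by
  induction k with
  | zero => simpa using chi4_one
  | succ k ih => rw [pow_succ, chi4_mul, ih, pow_succ]

lemma chi4_even {d : ℕ} (hd : d % 2 = 0) : chi4 d = 0 := by
  have h1 : d % 4 ≠ 1 := by omega
  have h3 : d % 4 ≠ 3 := by omega
  simp [chi4, h1, h3]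

noncomputable def chiF : ArithmeticFunction ℤ := ⟨chi4, by norm_num [chi4]⟩

noncomputable def S (n : ℕ) : ℤ := ∑ d ∈ n.divisors, chi4 d

open ArithmeticFunction ArithmeticFunction.zeta in
lemma S_mul {m n : ℕ} (h : m.Coprime n) : S (m * n) = S m * S n := by
  have hF : chiF.IsMultiplicative := ⟨chi4_one, fun _ => chi4_mul _ _⟩
  have hG : (chiF * (ζ : ArithmeticFunction ℤ)).IsMultiplicative :=
    hF.mul isMultiplicative_zeta.natCast
  have key : ∀ k, (chiF * (ζ : ArithmeticFunction ℤ)) k = S k := by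
    intro k
    rw [coe_mul_zeta_apply]
    rfl
  rw [← key, ← key, ← key, hG.map_mul_of_coprime h]

lemma S_prime_pow {p : ℕ} (hp : p.Prime) (k : ℕ) :
    S (p ^ k) = ∑ i ∈ Finset.range (k + 1), chi4 p ^ i := by
  rw [S, Nat.sum_divisors_prime_pow hp]
  exact Finset.sum_congr rfl fun i _ => chi4_pow p i

lemma S_one : S 1 = 1 := by simp [S, chi4_one]

lemma S_two_mul (m : ℕ) (hm : 0 < m) : S (2 * m) = S m := by
  rw [S, S]
  refine (Finset.sum_subset
    (Nat.divisors_subset_of_dvd (by omega : 2 * m ≠ 0) (dvd_mul_left m 2)) ?_).symm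
  intro d hd hdm
  rw [Nat.mem_divisors] at hd hdm
  have hd2 : d % 2 = 0 := by
    by_contra hodd
    have hcop : d.Coprime 2 := Nat.coprime_two_right.mpr (Nat.odd_iff.mpr (by omega))
    have : d ∣ m := hcop.dvd_of_dvd_mul_right (by rw [mul_comm 2 m] at hd; exact hd.1)
    exact hdm ⟨this, by omega⟩
  exact chi4_even hd2

lemma S_prime_three {p : ℕ} (hp : p.Prime) (hp3 : p % 4 = 3) : S p = 0 := by
  rw [S, hp.divisors, Finset.sum_insert (by simp [hp.ne_one.symm, hp.one_lt.ne]), 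
    Finset.sum_singleton, chi4_one]
  have : chi4 p = -1 := by simp [chi4, hp3]
  rw [this]
  ring

lemma S_p_one {p m : ℕ} (hp : p.Prime) (hp3 : p % 4 = 3) (hpm : ¬ p ∣ m) :
    S (p * m) = 0 := by
  rw [S_mul (hp.coprime_iff_not_dvd.mpr hpm), S_prime_three hp hp3, zero_mul]

lemma S_p_sq {p n : ℕ} (hp : p.Prime) (hp3 : p % 4 = 3) (hsq : p ^ 2 ∣ n) (hn : 0 < n) :
    S n = S (n / p ^ 2) := by
  set e := n.factorization p with he
  set m := n / p ^ e with hmdef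
  have he2 : 2 ≤ e := (Nat.Prime.pow_dvd_iff_le_factorization hp hn.ne').mp hsq
  have hmn : p ^ e * m = n := Nat.ordProj_mul_ordCompl_eq_self n p
  have hpm : ¬ p ∣ m := Nat.not_dvd_ordCompl hp hn.ne'
  have hq : n / p ^ 2 = p ^ (e - 2) * m := by
    have hsplit : p ^ e = p ^ 2 * p ^ (e - 2) := by
      rw [← pow_add]; congr 1; omega
    rw [← hmn, hsplit, mul_assoc, Nat.mul_div_cancel_left _ (pow_pos hp.pos 2)]
  have hcop : ∀ k : ℕ, (p ^ k).Coprime m := fun k =>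
    (hp.coprime_iff_not_dvd.mpr hpm).pow_left _
  have hc : chi4 p = -1 := by simp [chi4, hp3]
  have hgeom : S (p ^ e) = S (p ^ (e - 2)) := by
    rw [S_prime_pow hp, S_prime_pow hp, hc]
    have hk : e + 1 = (e - 2) + 1 + 1 + 1 := by omega
    rw [hk, Finset.sum_range_succ, Finset.sum_range_succ]
    have h1 : ((-1 : ℤ)) ^ ((e - 2) + 1 + 1) = (-1 : ℤ) ^ ((e - 2) + 1) * (-1) := by
      rw [pow_succ]
    rw [h1]
    ring
  calc S n = S (p ^ e) * S m := by rw [← hmn, S_mul (hcop e)]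
  _ = S (p ^ (e - 2)) * S m := by rw [hgeom]
  _ = S (n / p ^ 2) := by rw [hq, S_mul (hcop _)]

lemma S_p_split {p e m : ℕ} (hp : p.Prime) (hp1 : p % 4 = 1) (hpm : ¬ p ∣ m) :
    S (p ^ e * m) = (e + 1) * S m := by
  rw [S_mul ((hp.coprime_iff_not_dvd.mpr hpm).pow_left _), S_prime_pow hp]
  have hc : chi4 p = 1 := by simp [chi4, hp1]
  rw [hc]
  simp

end SSide

open Zsqrtd

local notation "ℤ[i]" => GaussianInt

noncomputable def gcount (n : ℕ) : ℕ := Nat.card {z : ℤ[i] // z.norm = (n : ℤ)}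

lemma norm_one_cases (z : ℤ[i]) (h : z.norm = 1) :
    z = ⟨1,0⟩ ∨ z = ⟨-1,0⟩ ∨ z = ⟨0,1⟩ ∨ z = ⟨0,-1⟩ := by
  rw [Zsqrtd.norm_def] at h
  have h' : z.re * z.re + z.im * z.im = 1 := by linarith
  have h1 : -1 ≤ z.re ∧ z.re ≤ 1 := by
    constructor <;> nlinarith [mul_self_nonneg z.im, mul_self_nonneg z.re]
  have h2 : -1 ≤ z.im ∧ z.im ≤ 1 := by
    constructor <;> nlinarith [mul_self_nonneg z.im, mul_self_nonneg z.re]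
  obtain ⟨hre, him⟩ := z
  simp only [Zsqrtd.ext_iff] at *
  obtain ⟨a1, a2⟩ := h1; obtain ⟨b1, b2⟩ := h2
  interval_cases hre <;> interval_cases him <;> omega

lemma gcount_one : gcount 1 = 4 := by
  have hset : {z : ℤ[i] | z.norm = ((1:ℕ) : ℤ)} = {⟨1,0⟩, ⟨-1,0⟩, ⟨0,1⟩, ⟨0,-1⟩} := by
    ext z
    simp only [Set.mem_setOf_eq, Set.mem_insert_iff, Set.mem_singleton_iff, Nat.cast_one]
    constructor
    · exact fun h => by simpa using norm_one_cases z h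
    · rintro (rfl|rfl|rfl|rfl) <;> simp [Zsqrtd.norm_def]
  have h4 : ({⟨1,0⟩, ⟨-1,0⟩, ⟨0,1⟩, ⟨0,-1⟩} : Set ℤ[i]).ncard = 4 := by
    rw [Set.ncard_insert_of_notMem (by simp [Zsqrtd.ext_iff])
        (((Set.finite_singleton _).insert _).insert _),
      Set.ncard_insert_of_notMem (by simp [Zsqrtd.ext_iff]) ((Set.finite_singleton _).insert _),
      Set.ncard_insert_of_notMem (by simp [Zsqrtd.ext_iff]), Set.ncard_singleton]
  have : gcount 1 = Set.ncard {z : ℤ[i] | z.norm = ((1:ℕ) : ℤ)} :=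
    (Nat.card_coe_set_eq _).symm
  rw [this, hset, h4]

lemma oneI_ne_zero : (⟨1,1⟩ : ℤ[i]) ≠ 0 := by
  simp [Zsqrtd.ext_iff]

lemma gcount_two_mul (m : ℕ) : gcount (2 * m) = gcount m := by
  refine (Nat.card_congr (Equiv.ofBijective
    (fun w : {z : ℤ[i] // z.norm = (m : ℤ)} =>
      (⟨(⟨1,1⟩ : ℤ[i]) * w.1, by
        rw [Zsqrtd.norm_mul, w.2, show ((⟨1,1⟩ : ℤ[i]).norm) = 2 by simp [Zsqrtd.norm_def]]
        push_cast; ring⟩ :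
        {z : ℤ[i] // z.norm = ((2 * m : ℕ) : ℤ)}))
    ⟨?_, ?_⟩)).symm
  · intro w w' h
    simp only [Subtype.mk.injEq] at h
    exact Subtype.ext (mul_left_cancel₀ oneI_ne_zero h)
  · rintro ⟨z, hz⟩
    have heven : Even (z.re * z.re + z.im * z.im) := by
      refine ⟨(m : ℤ), ?_⟩
      rw [show z.re * z.re + z.im * z.im = z.norm by rw [Zsqrtd.norm_def]; ring, hz]
      push_cast; ring
    rw [Int.even_add, Int.even_mul, or_self, Int.even_mul, or_self] at heven
    have hsum : Even (z.re + z.im) := by rw [Int.even_add]; exact heven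
    obtain ⟨k, hk⟩ := hsum
    have hmul : (⟨1,1⟩ : ℤ[i]) * ⟨k, k - z.re⟩ = z := by
      ext <;> simp [Zsqrtd.re_mul, Zsqrtd.im_mul] <;> omega
    have hnormw : (⟨k, k - z.re⟩ : ℤ[i]).norm = (m : ℤ) := by
      have h2 : (2 : ℤ) * (m : ℤ) = 2 * (⟨k, k - z.re⟩ : ℤ[i]).norm := by
        rw [show (2 : ℤ) * (⟨k, k - z.re⟩ : ℤ[i]).norm
            = ((⟨1,1⟩ : ℤ[i]).norm) * (⟨k, k - z.re⟩ : ℤ[i]).norm by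
          rw [show ((⟨1,1⟩ : ℤ[i]).norm) = 2 by simp [Zsqrtd.norm_def]],
          ← Zsqrtd.norm_mul, hmul, hz]
        push_cast; ring
      exact (mul_left_cancel₀ two_ne_zero h2).symm
    exact ⟨⟨⟨k, k - z.re⟩, hnormw⟩, Subtype.ext hmul⟩


/-- For `p ≡ 3 mod 4` prime, if `p` divides the norm of `z`, then `p ∣ z`. -/
lemma p_dvd_of_dvd_norm {p : ℕ} (hp : p.Prime) (hp3 : p % 4 = 3) {z : ℤ[i]}
    (h : (p : ℤ) ∣ z.norm) : (p : ℤ[i]) ∣ z := by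
  haveI : Fact p.Prime := ⟨hp⟩
  have hπ : Prime (p : ℤ[i]) :=
    (GaussianInt.prime_iff_mod_four_eq_three_of_nat_prime p).2 hp3
  have hdvd : (p : ℤ[i]) ∣ z * star z := by
    rw [← Zsqrtd.norm_eq_mul_conj]
    obtain ⟨c, hc⟩ := h
    exact ⟨(c : ℤ[i]), by rw [hc]; push_cast; ring⟩
  rcases hπ.2.2 _ _ hdvd with h1 | h2
  · exact h1
  · obtain ⟨c, hc⟩ := h2
    refine ⟨star c, ?_⟩
    have := congrArg star hc
    rw [star_star, star_mul'] at this
    simpa using this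

lemma natCast_gaussian_ne_zero {p : ℕ} (hp : 0 < p) : ((p : ℤ[i])) ≠ 0 := by
  intro h
  have := congrArg Zsqrtd.norm h
  rw [Zsqrtd.norm_natCast, Zsqrtd.norm_zero] at this
  have : (p : ℤ) = 0 := by nlinarith [this]
  omega

lemma gcount_p_sq {p : ℕ} (hp : p.Prime) (hp3 : p % 4 = 3) (m : ℕ) :
    gcount (p ^ 2 * m) = gcount m := by
  have hpz := natCast_gaussian_ne_zero hp.pos
  refine (Nat.card_congr (Equiv.ofBijective
    (fun w : {z : ℤ[i] // z.norm = (m : ℤ)} =>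
      (⟨(p : ℤ[i]) * w.1, by
        rw [Zsqrtd.norm_mul, w.2, Zsqrtd.norm_natCast]; push_cast; ring⟩ :
        {z : ℤ[i] // z.norm = ((p ^ 2 * m : ℕ) : ℤ)}))
    ⟨?_, ?_⟩)).symm
  · intro w w' h
    simp only [Subtype.mk.injEq] at h
    exact Subtype.ext (mul_left_cancel₀ hpz h)
  · rintro ⟨z, hz⟩
    have hdvd : (p : ℤ) ∣ z.norm := by
      rw [hz]; push_cast; exact ⟨(p : ℤ) * m, by ring⟩
    obtain ⟨w, hw⟩ := p_dvd_of_dvd_norm hp hp3 hdvd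
    have hnw : w.norm = (m : ℤ) := by
      have h2 : (p : ℤ) * p * (m : ℤ) = (p : ℤ) * p * w.norm := by
        have := hz
        rw [hw, Zsqrtd.norm_mul, Zsqrtd.norm_natCast] at this
        push_cast at this ⊢
        linarith [this]
      have hpne : ((p : ℤ)) * p ≠ 0 := by
        have : (p : ℤ) ≠ 0 := Int.natCast_ne_zero.2 hp.pos.ne'
        exact mul_ne_zero this this
      exact (mul_left_cancel₀ hpne h2).symm
    exact ⟨⟨w, hnw⟩, Subtype.ext hw.symm⟩

lemma gcount_p_one {p m : ℕ} (hp : p.Prime) (hp3 : p % 4 = 3) (hpm : ¬ p ∣ m) :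
    gcount (p * m) = 0 := by
  rw [gcount, Nat.card_eq_zero]
  left
  constructor
  rintro ⟨z, hz⟩
  have hdvd : (p : ℤ) ∣ z.norm := by rw [hz]; push_cast; exact ⟨(m : ℤ), rfl⟩
  obtain ⟨w, hw⟩ := p_dvd_of_dvd_norm hp hp3 hdvd
  have := hz
  rw [hw, Zsqrtd.norm_mul, Zsqrtd.norm_natCast] at this
  have hdvd2 : (p : ℤ) ∣ (m : ℤ) := by
    refine ⟨w.norm, ?_⟩
    have hpne : ((p : ℤ)) ≠ 0 := Int.natCast_ne_zero.2 hp.pos.ne'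
    apply mul_left_cancel₀ hpne
    push_cast at this ⊢
    linarith [this]
  exact hpm (Int.natCast_dvd_natCast.mp hdvd2)

lemma prime_of_norm_prime {π : ℤ[i]} (hn : Prime π.norm) : Prime π := by
  rw [← UniqueFactorizationMonoid.irreducible_iff_prime]
  constructor
  · intro hu
    rw [← Zsqrtd.norm_eq_one_iff' (by norm_num) π] at hu
    exact hn.not_unit (by rw [hu]; exact isUnit_one)
  · intro a b hab
    have h : π.norm = a.norm * b.norm := by rw [hab, Zsqrtd.norm_mul]
    rcases (hn.irreducible.isUnit_or_isUnit h) with h1 | h1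
    · left
      rw [← Zsqrtd.norm_eq_one_iff' (by norm_num) a]
      rcases Int.isUnit_iff.mp h1 with h2 | h2
      · exact h2
      · exfalso
        have := Zsqrtd.norm_nonneg (by norm_num : (-1:ℤ) ≤ 0) a
        omega
    · right
      rw [← Zsqrtd.norm_eq_one_iff' (by norm_num) b]
      rcases Int.isUnit_iff.mp h1 with h2 | h2
      · exact h2
      · exfalso
        have := Zsqrtd.norm_nonneg (by norm_num : (-1:ℤ) ≤ 0) b
        omega

lemma gnorm_pow (t : ℤ[i]) (k : ℕ) : (t ^ k).norm = t.norm ^ k := by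
  induction k with
  | zero => simp
  | succ k ih => rw [pow_succ, Zsqrtd.norm_mul, ih, pow_succ]

lemma not_prime_sq {p : ℕ} (hp : p.Prime) {x : ℤ} (h : x * x = (p:ℤ)) : False := by
  have h1 : x.natAbs * x.natAbs = p := by
    have h2 := Int.natAbs_mul_self (a := x)
    rw [h] at h2
    exact_mod_cast h2
  have hd : x.natAbs ∣ p := ⟨x.natAbs, h1.symm⟩
  rcases hp.eq_one_or_self_of_dvd _ hd with h2 | h2 <;> rw [h2] at h1 <;>
    nlinarith [hp.two_le]

lemma decomp {p : ℕ} (hp : p.Prime) {π : ℤ[i]} (hπ : Prime π) (hnπ : π.norm = (p : ℤ)) :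
    ∀ (e : ℕ) (z : ℤ[i]) (m : ℤ), z.norm = (p:ℤ)^e * m →
    ∃ j, j ≤ e ∧ ∃ w : ℤ[i], w.norm = m ∧ z = π ^ j * (star π) ^ (e - j) * w := by
  intro e
  induction e with
  | zero => intro z m h; exact ⟨0, le_refl 0, z, by simpa using h, by simp⟩
  | succ e ih =>
    intro z m h
    have hmulp : π * star π = ((p:ℕ) : ℤ[i]) := by
      rw [← Zsqrtd.norm_eq_mul_conj, hnπ]
      push_cast
      rfl
    have hpdvd : π ∣ z * star z := by
      refine dvd_trans ⟨star π, hmulp.symm⟩ ?_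
      rw [← Zsqrtd.norm_eq_mul_conj, h]
      refine ⟨(((p:ℤ)^e * m : ℤ) : ℤ[i]), ?_⟩
      push_cast
      ring
    have hpne : ((p:ℤ)) ≠ 0 := Int.natCast_ne_zero.2 hp.pos.ne'
    rcases hπ.2.2 z (star z) hpdvd with hdz | hdz
    · obtain ⟨z₁, hz₁⟩ := hdz
      have hn₁ : z₁.norm = (p:ℤ)^e * m := by
        have := h
        rw [hz₁, Zsqrtd.norm_mul, hnπ, pow_succ] at this
        have h2 : (p:ℤ) * ((p:ℤ)^e * m) = (p:ℤ) * z₁.norm := by linear_combination this.symm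
        exact (mul_left_cancel₀ hpne h2).symm
      obtain ⟨j, hj, w, hw, hzw⟩ := ih z₁ m hn₁
      refine ⟨j + 1, by omega, w, hw, ?_⟩
      have he : e + 1 - (j + 1) = e - j := by omega
      rw [hz₁, hzw, he, pow_succ]
      ring
    · obtain ⟨z₁', hz₁'⟩ := hdz
      obtain ⟨z₁, hz₁⟩ : star π ∣ z := by
        refine ⟨star z₁', ?_⟩
        have := congrArg star hz₁'
        rw [star_star, star_mul'] at this
        rw [this]
      have hn₁ : z₁.norm = (p:ℤ)^e * m := by
        have := h
        rw [hz₁, Zsqrtd.norm_mul, Zsqrtd.norm_conj, hnπ, pow_succ] at this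
        have h2 : (p:ℤ) * ((p:ℤ)^e * m) = (p:ℤ) * z₁.norm := by linear_combination this.symm
        exact (mul_left_cancel₀ hpne h2).symm
      obtain ⟨j, hj, w, hw, hzw⟩ := ih z₁ m hn₁
      refine ⟨j, by omega, w, hw, ?_⟩
      have he : e + 1 - j = (e - j) + 1 := by omega
      rw [hz₁, hzw, he, pow_succ]
      ring

lemma not_assoc {p : ℕ} (hp : p.Prime) (hp1 : p % 4 = 1) {π : ℤ[i]}
    (hnπ : π.norm = (p : ℤ)) : ¬ π ∣ star π := by
  rintro ⟨t, ht⟩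
  have hπne : π ≠ 0 := by
    intro h0
    rw [h0, Zsqrtd.norm_zero] at hnπ
    have := hp.pos
    omega
  have hnt : t.norm = 1 := by
    have h1 : (p : ℤ) * 1 = (p : ℤ) * t.norm := by
      have := congrArg Zsqrtd.norm ht
      rw [Zsqrtd.norm_conj, Zsqrtd.norm_mul, hnπ] at this
      linear_combination this
    exact (mul_left_cancel₀ (by exact_mod_cast hp.pos.ne') h1).symm
  have hkey : star π = π * t := ht
  have hn4 : 2 * (π.re * π.re) ≠ (p : ℤ) ∧ 2 * (π.im * π.im) ≠ (p : ℤ) := by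
    constructor <;> · rintro hq
                      have : ((p:ℕ) : ℤ) % 2 = 0 := by omega
                      have hodd : p % 2 = 1 := by omega
                      omega
  rcases norm_one_cases t hnt with rfl | rfl | rfl | rfl <;>
    simp only [Zsqrtd.ext_iff, Zsqrtd.re_mul, Zsqrtd.im_mul, Zsqrtd.re_star, Zsqrtd.im_star] at hkey <;>
    rw [Zsqrtd.norm_def] at hnπ
  · -- t = 1 : -im = im so im = 0, p = re*re
    exact not_prime_sq hp (x := π.re) (by nlinarith [hkey.2])
  · -- t = -1 : re = -re
    exact not_prime_sq hp (x := π.im) (by nlinarith [hkey.1])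
  · -- t = i : re = -im
    have him : π.re = -π.im := by linarith [hkey.1]
    refine hn4.2 ?_
    rw [him] at hnπ
    linear_combination hnπ
  · -- t = -i : re = im
    have him : π.re = π.im := by linarith [hkey.1]
    refine hn4.2 ?_
    rw [him] at hnπ
    linear_combination hnπ

lemma gcount_p_split {p : ℕ} (hp : p.Prime) (hp1 : p % 4 = 1) (e m : ℕ) (hpm : ¬ p ∣ m) :
    gcount (p ^ e * m) = (e + 1) * gcount m := by
  haveI : Fact p.Prime := ⟨hp⟩
  obtain ⟨a, b, hab⟩ := Nat.Prime.sq_add_sq (p := p) (by omega)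
  set π : ℤ[i] := ⟨(a:ℤ), (b:ℤ)⟩ with hπdef
  have hnπ : π.norm = (p : ℤ) := by
    rw [Zsqrtd.norm_def]
    have : ((a:ℤ))^2 + ((b:ℤ))^2 = (p:ℤ) := by exact_mod_cast congrArg (Nat.cast : ℕ → ℤ) hab
    simp only [hπdef]
    nlinarith [this]
  have hπp : Prime π := prime_of_norm_prime (by rw [hnπ]; exact Nat.prime_iff_prime_int.mp hp)
  have hπne : π ≠ 0 := hπp.ne_zero
  have hna : ¬ π ∣ star π := not_assoc hp hp1 hnπ
  have hndvd : ∀ w : ℤ[i], w.norm = (m : ℤ) → ¬ π ∣ w := by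
    rintro w hw ⟨c, hc⟩
    have : (p : ℤ) ∣ (m : ℤ) := by
      rw [← hw, hc, Zsqrtd.norm_mul, hnπ]
      exact ⟨c.norm, rfl⟩
    exact hpm (Int.natCast_dvd_natCast.mp this)
  -- the bijection
  have hcard := Nat.card_congr (Equiv.ofBijective
    (fun jw : Fin (e + 1) × {w : ℤ[i] // w.norm = (m : ℤ)} =>
      (⟨π ^ (jw.1 : ℕ) * (star π) ^ (e - (jw.1 : ℕ)) * jw.2.1, by
        have hj : (jw.1 : ℕ) ≤ e := Nat.lt_succ_iff.mp jw.1.2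
        rw [Zsqrtd.norm_mul, Zsqrtd.norm_mul, gnorm_pow, gnorm_pow, Zsqrtd.norm_conj,
          hnπ, jw.2.2, ← pow_add, Nat.add_sub_cancel' hj]
        push_cast
        ring⟩ :
        {z : ℤ[i] // z.norm = ((p ^ e * m : ℕ) : ℤ)}))
    ⟨?_, ?_⟩)
  · rw [gcount, gcount, ← hcard, Nat.card_prod, Nat.card_eq_fintype_card, Fintype.card_fin]
  · -- injective
    rintro ⟨j, w⟩ ⟨k, w'⟩ hjk
    simp only [Subtype.mk.injEq] at hjk
    have key : ∀ (j k : ℕ), j ≤ e → k ≤ e → ∀ (w w' : ℤ[i]), w.norm = (m:ℤ) → w'.norm = (m:ℤ) →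
        π ^ j * (star π) ^ (e - j) * w = π ^ k * (star π) ^ (e - k) * w' → ¬ j < k := by
      intro j k hje hke w w' hw hw' heq hlt
      have hdvd : π ^ (j + 1) ∣ π ^ k * (star π) ^ (e - k) * w' :=
        dvd_mul_of_dvd_left (dvd_mul_of_dvd_left (pow_dvd_pow π (by omega)) _) _
      rw [← heq] at hdvd
      obtain ⟨c, hc⟩ := hdvd
      have hc' : π ^ j * ((star π) ^ (e - j) * w) = π ^ j * (π * c) := by
        rw [← mul_assoc, ← mul_assoc]
        rw [pow_succ] at hc
        rw [hc]
      have h2 : (star π) ^ (e - j) * w = π * c := mul_left_cancel₀ (pow_ne_zero _ hπne) hc'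
      rcases hπp.2.2 _ _ ⟨c, h2⟩ with h3 | h3
      · exact hna (hπp.dvd_of_dvd_pow h3)
      · exact hndvd w hw h3
    have hje : (j : ℕ) ≤ e := Nat.lt_succ_iff.mp j.2
    have hke : (k : ℕ) ≤ e := Nat.lt_succ_iff.mp k.2
    have hjk' : (j : ℕ) = (k : ℕ) := by
      rcases lt_trichotomy (j : ℕ) (k : ℕ) with h | h | h
      · exact absurd h (key _ _ hje hke _ _ w.2 w'.2 hjk)
      · exact h
      · exact absurd h (key _ _ hke hje _ _ w'.2 w.2 hjk.symm)
    have hww : w = w' := by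
      rw [hjk'] at hjk
      exact Subtype.ext (mul_left_cancel₀
        (mul_ne_zero (pow_ne_zero _ hπne) (pow_ne_zero _ (star_ne_zero.mpr hπne))) hjk)
    exact Prod.ext (Fin.ext hjk') hww
  · -- surjective
    rintro ⟨z, hz⟩
    have hz' : z.norm = (p:ℤ)^e * (m : ℤ) := by rw [hz]; push_cast; ring
    obtain ⟨j, hj, w, hw, hzw⟩ := decomp hp hπp hnπ e z (m : ℤ) hz'
    exact ⟨⟨⟨j, Nat.lt_succ_of_le hj⟩, ⟨w, hw⟩⟩, Subtype.ext hzw.symm⟩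

lemma gcount_eq (n : ℕ) (hn : 0 < n) : (gcount n : ℤ) = 4 * S n := by
  induction n using Nat.strong_induction_on with
  | _ n ih =>
    rcases eq_or_lt_of_le (Nat.one_le_iff_ne_zero.mpr hn.ne') with h1 | h1
    · rw [← h1, gcount_one, S_one]
      norm_num
    · set p := n.minFac with hpdef
      have hp : p.Prime := Nat.minFac_prime (by omega)
      have hpn : p ∣ n := n.minFac_dvd
      by_cases hp2 : p = 2
      · obtain ⟨m, hm⟩ := hpn
        rw [hp2] at hm
        have hm0 : 0 < m := by omega
        have hmlt : m < n := by omega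
        rw [hm, gcount_two_mul, S_two_mul m hm0]
        exact ih m hmlt hm0
      · have hodd : p % 2 = 1 := hp.eq_two_or_odd.resolve_left hp2
        have h4 : p % 4 = 1 ∨ p % 4 = 3 := by omega
        rcases h4 with hp1 | hp3
        · -- p ≡ 1 mod 4
          set e := n.factorization p with he
          set m := n / p ^ e with hmdef
          have hmn : p ^ e * m = n := Nat.ordProj_mul_ordCompl_eq_self n p
          have hpm : ¬ p ∣ m := Nat.not_dvd_ordCompl hp hn.ne'
          have hm0 : 0 < m := Nat.ordCompl_pos p hn.ne'
          have he1 : 1 ≤ e := (Nat.Prime.pow_dvd_iff_le_factorization hp hn.ne').mp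
            (by simpa using hpn)
          have hpe : 1 < p ^ e := Nat.one_lt_pow (by omega) hp.one_lt
          have hmlt : m < n := by rw [hmdef]; exact Nat.div_lt_self hn hpe
          rw [← hmn, gcount_p_split hp hp1 e m hpm, S_p_split hp hp1 hpm]
          push_cast
          rw [ih m hmlt hm0]
          ring
        · -- p ≡ 3 mod 4
          by_cases hsq : p ^ 2 ∣ n
          · obtain ⟨m, hm⟩ := hsq
            have hm0 : 0 < m := by
              rcases Nat.eq_zero_or_pos m with rfl | h
              · simp at hm; omega
              · exact h
            have hmlt : m < n := by
              have h2 : 2 * m ≤ p ^ 2 * m := Nat.mul_le_mul_right m (by nlinarith [hp.two_le])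
              omega
            have hS : S n = S m := by
              have := S_p_sq hp hp3 ⟨m, hm⟩ hn
              rwa [hm, Nat.mul_div_cancel_left m (pow_pos hp.pos 2), ← hm] at this
            rw [hm, gcount_p_sq hp hp3 m, ← hm, hS]
            exact ih m hmlt hm0
          · obtain ⟨m, hm⟩ := hpn
            have hpm : ¬ p ∣ m := by
              rintro ⟨c, hc⟩
              exact hsq ⟨c, by rw [hm, hc]; ring⟩
            rw [hm, gcount_p_one hp hp3 hpm, S_p_one hp hp3 hpm]
            norm_num

/-- For every positive integer `n`, the number of representations of `n` as an ordered
sum of two squares of integers equals `4 * ∑_{d ∣ n} χ₄(d)`. -/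
theorem sum_two_squares_count (n : ℕ) (hn : 0 < n) :
    (Set.ncard {p : ℤ × ℤ | p.1 ^ 2 + p.2 ^ 2 = (n : ℤ)} : ℤ)
      = 4 * ∑ d ∈ n.divisors, chi4 d := by
  have hequiv : {q : ℤ × ℤ // q.1 ^ 2 + q.2 ^ 2 = (n : ℤ)} ≃
      {z : ℤ[i] // z.norm = (n : ℤ)} :=
    { toFun := fun q => ⟨⟨q.1.1, q.1.2⟩, by
        rw [Zsqrtd.norm_def]
        linear_combination q.2⟩
      invFun := fun z => ⟨(z.1.re, z.1.im), by
        have := z.2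
        rw [Zsqrtd.norm_def] at this
        linear_combination this⟩
      left_inv := fun q => by ext <;> rfl
      right_inv := fun z => by ext <;> rfl }
  have h1 : Set.ncard {p : ℤ × ℤ | p.1 ^ 2 + p.2 ^ 2 = (n : ℤ)} = gcount n := by
    rw [← Nat.card_coe_set_eq, Set.coe_setOf, gcount]
    exact Nat.card_congr hequiv
  rw [h1]
  exact gcount_eq n hn
end

section
/- Let X ≥ 2, k = ⌊log X⌋, ε > 0, H = (log X)²/ε, and suppose |Θ(t)| ≤ (1/(π|t|))·(k/(2π|t|·(ε/10)))^k for all t ≠ 0. Then for any function S with |S(t)| ≤ X log X for all t, one has |∫_{|t|>H} Θ(t) S(t)⁴ dt| ≪ 1 for X sufficiently large, with an absolute implied constant. -/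
open Real MeasureTheory Set

private lemma tail_aux_pt (k : ℕ) (c b u : ℝ) (hu : 0 < u) (hc : c ≠ 0) :
    1 / (π * u) * (c / u) ^ k * b = b / π * c ^ k / u ^ (k + 1) := by
  have hπ : (0:ℝ) < π := Real.pi_pos
  rw [div_pow]
  field_simp
  ring

private lemma tail_aux_int {B H : ℝ} (k : ℕ) (hk : 0 < k) (hB : 0 < B) (hH : 0 < H) :
    IntegrableOn (fun t : ℝ => B / |t| ^ (k + 1)) {t : ℝ | H < |t|} ∧
      ∫ t in {t : ℝ | H < |t|}, B / |t| ^ (k + 1) = 2 * (B / ((k : ℝ) * H ^ k)) := by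
  set h : ℝ → ℝ := fun t => B / |t| ^ (k + 1) with hhdef
  have hkpos' : (0:ℝ) ≤ (k:ℝ) := Nat.cast_nonneg k
  have hAeq : {t : ℝ | H < |t|} = Iio (-H) ∪ Ioi H := by
    ext t
    simp only [mem_setOf_eq, mem_union, mem_Iio, mem_Ioi, lt_abs, lt_neg]
    tauto
  have hk1 : (1:ℝ) ≤ (k:ℝ) := by exact_mod_cast hk
  have ha : -((k:ℝ) + 1) < -1 := by linarith
  have heqIoi : ∀ t ∈ Ioi H, B * t ^ (-((k:ℝ) + 1)) = h t := by
    intro t ht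
    have htpos : (0:ℝ) < t := lt_trans hH ht
    have : t ^ (-((k:ℝ) + 1)) = (t ^ (k + 1 : ℕ))⁻¹ := by
      rw [Real.rpow_neg htpos.le, show ((k:ℝ) + 1) = ((k + 1 : ℕ) : ℝ) by push_cast; ring,
        Real.rpow_natCast]
    rw [hhdef]
    simp only
    rw [abs_of_pos htpos, this, div_eq_mul_inv]
  have hIoi : IntegrableOn h (Ioi H) := by
    have := (integrableOn_Ioi_rpow_of_lt ha hH).const_mul B
    exact IntegrableOn.congr_fun this heqIoi measurableSet_Ioi
  have hintIoi : ∫ t in Ioi H, h t = B / ((k:ℝ) * H ^ k) := by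
    rw [setIntegral_congr_fun measurableSet_Ioi (fun t ht => (heqIoi t ht).symm),
      integral_const_mul, integral_Ioi_rpow_of_lt ha hH]
    rw [show -((k:ℝ) + 1) + 1 = -(k:ℝ) by ring, Real.rpow_neg hH.le, Real.rpow_natCast]
    have hHk : H ^ k ≠ 0 := by positivity
    have hkne : (k:ℝ) ≠ 0 := by linarith
    field_simp
  have hneg : ∀ t : ℝ, h (-t) = h t := by
    intro t; simp [hhdef, abs_neg]
  have hmapmeas : Measurable (fun x : ℝ => -x) := measurable_neg
  have hpre : (fun x : ℝ => -x) ⁻¹' (Iio (-H)) = Ioi H := by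
    ext x; simp
  have hrestrict : (volume : Measure ℝ).restrict (Iio (-H))
      = Measure.map (fun x : ℝ => -x) (volume.restrict (Ioi H)) := by
    conv_lhs => rw [← Measure.map_neg_eq_self (volume : Measure ℝ)]
    rw [Measure.restrict_map hmapmeas measurableSet_Iio, hpre]
  have hemb : MeasurableEmbedding (fun x : ℝ => -x) :=
    (Homeomorph.neg ℝ).isClosedEmbedding.measurableEmbedding
  have hIio : IntegrableOn h (Iio (-H)) := by
    rw [IntegrableOn, hrestrict, hemb.integrable_map_iff]
    exact hIoi.congr_fun (fun t _ => (hneg t).symm) measurableSet_Ioi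
  have hintIio : ∫ t in Iio (-H), h t = B / ((k:ℝ) * H ^ k) := by
    rw [setIntegral_congr_set Iio_ae_eq_Iic, ← integral_comp_neg_Ioi]
    simp only [hneg]
    exact hintIoi
  have hdisj : Disjoint (Iio (-H)) (Ioi H) := by
    apply Set.disjoint_left.mpr
    intro x hx1 hx2
    simp only [mem_Iio] at hx1
    simp only [mem_Ioi] at hx2
    linarith
  constructor
  · rw [hAeq]; exact hIio.union hIoi
  · rw [hAeq, setIntegral_union hdisj measurableSet_Ioi hIio hIoi, hintIio, hintIoi]
    ring

private lemma tail_aux_exp6 : Real.exp 6 < 600 := by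
  have h1 : Real.exp 1 < 2.7182818286 := Real.exp_one_lt_d9
  have h2 : Real.exp 6 = Real.exp 1 ^ 6 := by
    rw [← Real.exp_nat_mul]; norm_num
  calc Real.exp 6 = Real.exp 1 ^ 6 := h2
    _ ≤ 2.7182818286 ^ 6 := pow_le_pow_left₀ (Real.exp_pos 1).le h1.le 6
    _ < 600 := by norm_num

private lemma tail_aux_base {L : ℝ} (k : ℕ) (hL3000 : 3000 ≤ L) (hkL : (k:ℝ) ≤ L) :
    5 * (k:ℝ) / (π * L ^ 2) ≤ Real.exp (-6) := by
  have hπ : (0:ℝ) < π := Real.pi_pos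
  have hLpos : (0:ℝ) < L := by linarith
  have hkpos' : (0:ℝ) ≤ (k:ℝ) := Nat.cast_nonneg k
  have h5 : 5 * (k:ℝ) / (π * L ^ 2) ≤ 5 / (π * L) := by
    rw [div_le_div_iff₀ (by positivity) (by positivity)]
    nlinarith [mul_le_mul_of_nonneg_left hkL (mul_pos hπ hLpos).le]
  have hexp6 := tail_aux_exp6
  have hπ3 : (3:ℝ) < π := Real.pi_gt_three
  have h9000 : (9000:ℝ) ≤ π * L := by
    nlinarith [mul_le_mul hπ3.le hL3000 (by norm_num : (0:ℝ) ≤ 3000) (by linarith : (0:ℝ) ≤ π)]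
  have hinv : Real.exp (-6) * Real.exp 6 = 1 := by
    rw [← Real.exp_add]; norm_num
  have : 5 / (π * L) ≤ Real.exp (-6) := by
    rw [div_le_iff₀ (by positivity)]
    have hh1 : Real.exp (-6) * 9000 ≤ Real.exp (-6) * (π * L) :=
      mul_le_mul_of_nonneg_left h9000 (Real.exp_pos (-6)).le
    have hh2 : (0:ℝ) < Real.exp (-6) * (600 - Real.exp 6) :=
      mul_pos (Real.exp_pos (-6)) (by linarith)
    rw [mul_sub] at hh2
    linarith [hh1, hh2, hinv]
  linarith

private lemma tail_aux_num {L ε : ℝ} (k : ℕ) (hL3000 : 3000 ≤ L) (hε : 0 < ε)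
    (hkL : (k:ℝ) ≤ L) (hLk : L - 1 ≤ (k:ℝ)) (hk3000 : 3000 ≤ (k:ℝ)) :
    2 * ((Real.exp L * L) ^ 4 / π * ((k:ℝ) / (2 * π * (ε / 10))) ^ k
      / ((k:ℝ) * (L ^ 2 / ε) ^ k)) ≤ 1 := by
  have hπ : (0:ℝ) < π := Real.pi_pos
  have hLpos : (0:ℝ) < L := by linarith
  have hkpos : (0:ℝ) < (k:ℝ) := by linarith
  have hHpos : (0:ℝ) < L ^ 2 / ε := div_pos (by positivity) hε
  have hεne : ε ≠ 0 := ne_of_gt hε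
  have hLne : L ≠ 0 := ne_of_gt hLpos
  have hπne : π ≠ 0 := ne_of_gt hπ
  have hkne : (k:ℝ) ≠ 0 := ne_of_gt hkpos
  have base_eq : ((k:ℝ) / (2 * π * (ε / 10))) / (L ^ 2 / ε) = 5 * (k:ℝ) / (π * L ^ 2) := by
    field_simp; ring
  have generic : ∀ b c q : ℝ, 0 < q → (b / π * c ^ k) / ((k:ℝ) * q ^ k)
      = b / (π * (k:ℝ)) * (c / q) ^ k := by
    intro b c q hq
    have hq' : q ^ k ≠ 0 := by positivity
    rw [div_pow]
    field_simp
  rw [generic _ _ _ hHpos, base_eq]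
  have hbase := tail_aux_base k hL3000 hkL
  have hbase_nonneg : (0:ℝ) ≤ 5 * (k:ℝ) / (π * L ^ 2) := by positivity
  have hpow2 : (5 * (k:ℝ) / (π * L ^ 2)) ^ k ≤ Real.exp (6 - 6 * L) := by
    calc (5 * (k:ℝ) / (π * L ^ 2)) ^ k ≤ Real.exp (-6) ^ k :=
          pow_le_pow_left₀ hbase_nonneg hbase k
      _ = Real.exp ((k:ℝ) * (-6)) := (Real.exp_nat_mul _ _).symm
      _ ≤ Real.exp (6 - 6 * L) := by
          apply Real.exp_le_exp.mpr; linarith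
  have hexp6 := tail_aux_exp6
  have hπ3 : (3:ℝ) < π := Real.pi_gt_three
  have q1 : L / 4 + 1 ≤ Real.exp (L / 4) := Real.add_one_le_exp _
  have q2 : Real.exp (2 * L) = Real.exp (L / 4) ^ 8 := by
    rw [← Real.exp_nat_mul]; congr 1; push_cast; ring
  have q3 : (L / 4) ^ 8 ≤ Real.exp (2 * L) := by
    rw [q2]
    calc (L / 4) ^ 8 ≤ (L / 4 + 1) ^ 8 := pow_le_pow_left₀ (by positivity) (by linarith) 8
      _ ≤ Real.exp (L / 4) ^ 8 := pow_le_pow_left₀ (by positivity) q1 8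
  have hL4 : (3000:ℝ) ^ 4 ≤ L ^ 4 := pow_le_pow_left₀ (by norm_num) hL3000 4
  have step : (Real.exp L * L) ^ 4 / (π * (k:ℝ)) * (5 * (k:ℝ) / (π * L ^ 2)) ^ k
      ≤ (Real.exp L * L) ^ 4 / (π * (k:ℝ)) * Real.exp (6 - 6 * L) :=
    mul_le_mul_of_nonneg_left hpow2 (by positivity)
  have main : 2 * ((Real.exp L * L) ^ 4 / (π * (k:ℝ)) * Real.exp (6 - 6 * L)) ≤ 1 := by
    have hx4 : Real.exp L ^ 4 = Real.exp (4 * L) := by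
      rw [← Real.exp_nat_mul]; norm_num
    have hcomb : Real.exp (4 * L) * Real.exp (6 - 6 * L)
        = Real.exp 6 * (Real.exp (2 * L))⁻¹ := by
      rw [← Real.exp_add, ← Real.exp_neg, ← Real.exp_add]; congr 1; ring
    have expand : 2 * ((Real.exp L * L) ^ 4 / (π * (k:ℝ)) * Real.exp (6 - 6 * L))
        = 2 * L ^ 4 * (Real.exp 6 * (Real.exp (2 * L))⁻¹) / (π * (k:ℝ)) := by
      rw [mul_pow, hx4, ← hcomb]; ring
    rw [expand, div_le_one (by positivity)]
    have r2 : (9000:ℝ) ≤ π * (k:ℝ) := by nlinarith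
    have r3 : 1200 * L ^ 4 ≤ 9000 * (L / 4) ^ 8 := by
      nlinarith [mul_le_mul_of_nonneg_left hL4 (le_of_lt (pow_pos hLpos 4)),
        pow_pos hLpos 4]
    have r4 : π * (k:ℝ) * (L / 4) ^ 8 ≤ π * (k:ℝ) * Real.exp (2 * L) :=
      mul_le_mul_of_nonneg_left q3 (by positivity)
    have r5 : 9000 * (L / 4) ^ 8 ≤ π * (k:ℝ) * (L / 4) ^ 8 :=
      mul_le_mul_of_nonneg_right r2 (by positivity)
    have r1 : 2 * L ^ 4 * Real.exp 6 ≤ 1200 * L ^ 4 := by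
      nlinarith [pow_pos hLpos 4]
    have target : 2 * L ^ 4 * Real.exp 6 ≤ π * (k:ℝ) * Real.exp (2 * L) := by linarith
    calc 2 * L ^ 4 * (Real.exp 6 * (Real.exp (2 * L))⁻¹)
        = 2 * L ^ 4 * Real.exp 6 / Real.exp (2 * L) := by ring
      _ ≤ π * (k:ℝ) := (div_le_iff₀ (Real.exp_pos _)).mpr target
  linarith

/-- Tail estimate: with `k = ⌊log X⌋`, `H = (log X)²/ε` and
`|Θ(t)| ≤ (1/(π|t|)) (k/(2π|t|(ε/10)))^k`, any `S` with `|S(t)| ≤ X log X` satisfies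
`|∫_{|t|>H} Θ(t) S(t)⁴ dt| ≪ 1` for `X` sufficiently large, absolute implied constant. -/
theorem tail_of_smoothed_integral :
    ∃ C : ℝ, 0 < C ∧ ∃ X₀ : ℝ, ∀ X : ℝ, X₀ ≤ X → ∀ ε : ℝ, 0 < ε → ∀ Θ S : ℝ → ℂ,
      (∀ t : ℝ, t ≠ 0 →
          ‖Θ t‖ ≤ 1 / (Real.pi * |t|) *
            ((⌊Real.log X⌋₊ : ℝ) / (2 * Real.pi * |t| * (ε / 10))) ^ (⌊Real.log X⌋₊)) →
      (∀ t : ℝ, ‖S t‖ ≤ X * Real.log X) →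
      ‖∫ t in {t : ℝ | Real.log X ^ 2 / ε < |t|}, Θ t * S t ^ 4‖ ≤ C := by
  refine ⟨1, one_pos, Real.exp 3000, ?_⟩
  intro X hX ε hε Θ S hΘ hS
  set L := Real.log X with hLdef
  set k := ⌊L⌋₊ with hkdef
  set H := L ^ 2 / ε with hHdef
  have hX0 : (0:ℝ) < X := lt_of_lt_of_le (exp_pos 3000) hX
  have hXL : X = Real.exp L := (Real.exp_log hX0).symm
  have hL3000 : (3000:ℝ) ≤ L := by
    have := Real.log_le_log (exp_pos 3000) hX
    rwa [Real.log_exp] at this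
  have hLpos : (0:ℝ) < L := by linarith
  have hkL : (k:ℝ) ≤ L := Nat.floor_le hLpos.le
  have hLk : L - 1 ≤ (k:ℝ) := by
    have := Nat.lt_floor_add_one L
    push_cast at this ⊢
    linarith
  have hk3000 : (3000:ℝ) ≤ (k:ℝ) := by
    have : (3000:ℕ) ≤ k := Nat.le_floor (by exact_mod_cast hL3000)
    exact_mod_cast this
  have hkpos : 0 < k := by
    have : (0:ℝ) < (k:ℝ) := by linarith
    exact_mod_cast this
  have hHpos : (0:ℝ) < H := div_pos (by positivity) hε
  have hπ : (0:ℝ) < π := Real.pi_pos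
  set B := (X * L) ^ 4 / π * ((k:ℝ) / (2 * π * (ε / 10))) ^ k with hBdef
  have hBpos : (0:ℝ) < B := by positivity
  set h : ℝ → ℝ := fun t => B / |t| ^ (k + 1) with hhdef
  set A := {t : ℝ | H < |t|} with hAdef
  have hAmeas : MeasurableSet A := by
    have : A = Iio (-H) ∪ Ioi H := by
      ext t
      simp only [hAdef, mem_setOf_eq, mem_union, mem_Iio, mem_Ioi, lt_abs, lt_neg]
      tauto
    rw [this]; exact measurableSet_Iio.union measurableSet_Ioi
  clear_value L k H B h A
  obtain ⟨hIntA, hintA⟩ :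
      IntegrableOn h A ∧ ∫ t in A, h t = 2 * (B / ((k:ℝ) * H ^ k)) := by
    rw [hAdef, hhdef]
    exact tail_aux_int k hkpos hBpos hHpos
  have hpt : ∀ t ∈ A, ‖Θ t * S t ^ 4‖ ≤ h t := by
    intro t ht
    have htH : H < |t| := by rw [hAdef] at ht; exact ht
    have htpos : (0:ℝ) < |t| := lt_trans hHpos htH
    have htne : t ≠ 0 := by
      intro h0; rw [h0] at htpos; simp at htpos
    have h2 : ‖S t‖ ^ 4 ≤ (X * L) ^ 4 := by
      apply pow_le_pow_left₀ (norm_nonneg _) (hS t)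
    have h3 := hΘ t htne
    have hcne : (k:ℝ) / (2 * π * (ε / 10)) ≠ 0 := by positivity
    have hcu : (k:ℝ) / (2 * π * |t| * (ε / 10)) = ((k:ℝ) / (2 * π * (ε / 10))) / |t| := by
      rw [div_div]; congr 1; ring
    have key : 1 / (π * |t|) * ((k:ℝ) / (2 * π * |t| * (ε / 10))) ^ k * (X * L) ^ 4
        = h t := by
      rw [hcu, tail_aux_pt k _ _ _ htpos hcne, hhdef, ← hBdef]
    calc ‖Θ t * S t ^ 4‖ = ‖Θ t‖ * ‖S t‖ ^ 4 := by rw [norm_mul, norm_pow]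
      _ ≤ (1 / (π * |t|) * ((k:ℝ) / (2 * π * |t| * (ε / 10))) ^ k) * (X * L) ^ 4 :=
          mul_le_mul h3 h2 (by positivity) (by positivity)
      _ = h t := key
  have step1 : ‖∫ t in A, Θ t * S t ^ 4‖ ≤ ∫ t in A, ‖Θ t * S t ^ 4‖ :=
    norm_integral_le_integral_norm _
  have step2 : ∫ t in A, ‖Θ t * S t ^ 4‖ ≤ ∫ t in A, h t := by
    apply integral_mono_of_nonneg
    · filter_upwards with t using norm_nonneg _
    · exact hIntA
    · filter_upwards [self_mem_ae_restrict hAmeas] with t ht using hpt t ht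
  have final : 2 * (B / ((k:ℝ) * H ^ k)) ≤ 1 := by
    rw [hBdef, hHdef, hXL]
    exact tail_aux_num k hL3000 hε hkL hLk hk3000
  calc ‖∫ t in A, Θ t * S t ^ 4‖ ≤ ∫ t in A, ‖Θ t * S t ^ 4‖ := step1
    _ ≤ ∫ t in A, h t := step2
    _ = 2 * (B / ((k:ℝ) * H ^ k)) := hintA
    _ ≤ 1 := final
end
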